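/- arXiv:1807.11183 — 2 statements merged into one kernel-verified Lean document; each statement's English description precedes it below -/
import Mathlib

section
/- Let S = (a_1, ..., a_n) be a signature of Q_n that reduces over a proper nonempty subset R of [n], let T be an upright spanning tree of Q_n with signature S, and let X be a nonempty vertex of Q_n. Then ψ_T(X) ∈ R if and only if X ⊆ R. -/
open SimpleGraph

/-- The `n`-cube: vertices are the subsets of `[n]` (modelled as `Finset (Fin n)`),
with an edge between `X` and `Y` iff their symmetric difference is a singleton. -/
def cube (n : ℕ) : SimpleGraph (Finset (Fin n)) where
  Adj X Y := (symmDiff X Y).card = 1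
  symm := by
    constructor
    intro X Y h
    rwa [symmDiff_comm]
  loopless := by
    constructor
    intro X h
    simp [symmDiff_self, Finset.bot_eq_empty] at h

/-- `T` is a spanning tree of `G` (both graphs on the same vertex set). -/
def IsSpanningTreeOf {V : Type*} (T G : SimpleGraph V) : Prop :=
  T ≤ G ∧ T.IsTree

/-- The edge `e` of the `n`-cube is in direction `i`. -/
def edgeInDir {n : ℕ} (i : Fin n) (e : Sym2 (Finset (Fin n))) : Prop :=
  ∃ X : Finset (Fin n), e = s(X, symmDiff X {i})

/-- The number of edges of `T` in direction `i`. -/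
noncomputable def dirCount {n : ℕ} (T : SimpleGraph (Finset (Fin n))) (i : Fin n) : ℕ :=
  {e | e ∈ T.edgeSet ∧ edgeInDir i e}.ncard

/-- `a` is the signature of the tree `T`. -/
def HasSig {n : ℕ} (T : SimpleGraph (Finset (Fin n))) (a : Fin n → ℕ) : Prop :=
  ∀ i, dirCount T i = a i

/-- `a` is a signature of `Q_n`, i.e. the signature of some spanning tree of the `n`-cube. -/
def IsSignature (n : ℕ) (a : Fin n → ℕ) : Prop :=
  ∃ T, IsSpanningTreeOf T (cube n) ∧ HasSig T a

/-- A section of the set of nonempty subsets of `[n]`. -/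
def IsSection {n : ℕ} (ψ : Finset (Fin n) → Fin n) : Prop :=
  ∀ X : Finset (Fin n), X.Nonempty → ψ X ∈ X

/-- The number of nonempty subsets on which the section `ψ` takes the value `i`. -/
noncomputable def secCount {n : ℕ} (ψ : Finset (Fin n) → Fin n) (i : Fin n) : ℕ :=
  {X : Finset (Fin n) | X.Nonempty ∧ ψ X = i}.ncard

/-- The tuple `a` reduces over `R` : `Σ_{i ∈ R} a i = 2^|R| - 1`. -/
def ReducesOver {n : ℕ} (a : Fin n → ℕ) (R : Finset (Fin n)) : Prop :=
  ∑ i ∈ R, a i = 2 ^ R.card - 1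

/-- `a` is reducible: it reduces over some proper nonempty subset of `[n]`. -/
def IsReducibleSig {n : ℕ} (a : Fin n → ℕ) : Prop :=
  ∃ R : Finset (Fin n), R.Nonempty ∧ R ≠ Finset.univ ∧ ReducesOver a R

/-- `a` is irreducible. -/
def IsIrreducibleSig {n : ℕ} (a : Fin n → ℕ) : Prop := ¬ IsReducibleSig a

/-- `T` is upright: every vertex `X` is at distance `|X|` in `T` from the root `∅`. -/
def IsUpright {n : ℕ} (T : SimpleGraph (Finset (Fin n))) : Prop :=
  ∀ X : Finset (Fin n), T.dist X ∅ = X.card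

/-- `ψ` is the section associated to the upright tree `T`: for each nonempty `X`,
`ψ X ∈ X` and `X - {ψ X}` is the next vertex after `X` on the path in `T` from `X` to `∅`. -/
def IsTreeSection {n : ℕ} (T : SimpleGraph (Finset (Fin n))) (ψ : Finset (Fin n) → Fin n) : Prop :=
  ∀ X : Finset (Fin n), X.Nonempty → ψ X ∈ X ∧ T.Adj X (X.erase (ψ X))

/-- The minimum of `Σ_{i ∈ K} a i` over the sets `K` of `k` directions. -/
noncomputable def minSum {n : ℕ} (a : Fin n → ℕ) (k : ℕ) : ℕ :=
  sInf {m : ℕ | ∃ K : Finset (Fin n), K.card = k ∧ ∑ i ∈ K, a i = m}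

/-- The excess of `a` at `k`. -/
noncomputable def excess {n : ℕ} (a : Fin n → ℕ) (k : ℕ) : ℤ :=
  (minSum a k : ℤ) - (2 ^ k - 1)

/-- The result of sliding the edge `e` in direction `i`. -/
def slideEdge {n : ℕ} (i : Fin n) (e : Sym2 (Finset (Fin n))) : Sym2 (Finset (Fin n)) :=
  Sym2.map (fun X => symmDiff X {i}) e

/-- The edge `e` of the spanning tree `T` of `Q_n` is `i`-slidable. -/
def Slidable (n : ℕ) (T : SimpleGraph (Finset (Fin n))) (i : Fin n)
    (e : Sym2 (Finset (Fin n))) : Prop :=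
  e ∈ T.edgeSet ∧
    IsSpanningTreeOf (SimpleGraph.fromEdgeSet ((T.edgeSet \ {e}) ∪ {slideEdge i e})) (cube n)

/-- The edge set `E` is (the edge set of) a spanning tree of the subgraph of the
`n`-cube induced on the vertex set `s`. -/
def IsSpanningTreeOn (n : ℕ) (s : Set (Finset (Fin n))) (E : Set (Sym2 (Finset (Fin n)))) : Prop :=
  E ⊆ (cube n).edgeSet ∧ (∀ e ∈ E, ∀ v ∈ e, v ∈ s) ∧
    ((SimpleGraph.fromEdgeSet E).induce s).IsTree

/-- The edges of `T` with both endpoints in `s`. -/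
def edgesWithin {n : ℕ} (s : Set (Finset (Fin n))) (T : SimpleGraph (Finset (Fin n))) :
    Set (Sym2 (Finset (Fin n))) :=
  {e | e ∈ T.edgeSet ∧ ∀ v ∈ e, v ∈ s}

/-- The edge `e` of the tree with edge set `E`, spanning the subgraph of the `n`-cube
induced on `s`, is `i`-slidable. -/
def SlidableOn (n : ℕ) (s : Set (Finset (Fin n))) (E : Set (Sym2 (Finset (Fin n))))
    (i : Fin n) (e : Sym2 (Finset (Fin n))) : Prop :=
  e ∈ E ∧ IsSpanningTreeOn n s ((E \ {e}) ∪ {slideEdge i e})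

/-- The number of edges of `T` in direction `i` with both endpoints in `s`. -/
noncomputable def dirCountOn {n : ℕ} (s : Set (Finset (Fin n)))
    (T : SimpleGraph (Finset (Fin n))) (i : Fin n) : ℕ :=
  {e | e ∈ T.edgeSet ∧ edgeInDir i e ∧ ∀ v ∈ e, v ∈ s}.ncard

/-- `T'` is a spanning tree of the `n`-cube obtained from the spanning tree `T` by a
single edge slide. -/
def SlideStep (n : ℕ) (T T' : SimpleGraph (Finset (Fin n))) : Prop :=
  IsSpanningTreeOf T (cube n) ∧ IsSpanningTreeOf T' (cube n) ∧
    ∃ (i : Fin n) (e : Sym2 (Finset (Fin n))), e ∈ T.edgeSet ∧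
      T' = SimpleGraph.fromEdgeSet ((T.edgeSet \ {e}) ∪ {slideEdge i e})

/-- The trees `T` and `T'` are related by a single edge slide. -/
def SlideAdj (n : ℕ) (T T' : SimpleGraph (Finset (Fin n))) : Prop :=
  T ≠ T' ∧ ∃ (i : Fin n) (e : Sym2 (Finset (Fin n))),
    (e ∈ T.edgeSet ∧ T' = SimpleGraph.fromEdgeSet ((T.edgeSet \ {e}) ∪ {slideEdge i e})) ∨
    (e ∈ T'.edgeSet ∧ T = SimpleGraph.fromEdgeSet ((T'.edgeSet \ {e}) ∪ {slideEdge i e}))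

/-- The spanning trees of the `n`-cube. -/
def SpanningTrees (n : ℕ) := {T : SimpleGraph (Finset (Fin n)) // IsSpanningTreeOf T (cube n)}

/-- The edge slide graph `E(n)` of the `n`-cube. -/
def eslide (n : ℕ) : SimpleGraph (SpanningTrees n) where
  Adj T T' := SlideAdj n T.1 T'.1
  symm := by
    constructor
    rintro T T' ⟨hne, i, e, h⟩
    exact ⟨hne.symm, i, e, h.symm⟩
  loopless := by
    constructor
    rintro T ⟨hne, -⟩
    exact hne rfl

/-- The projection `π_R(T)` of `T` to `Q_R`: a graph on the subsets of `R`, with `A`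
adjacent to `B` iff some edge of `T` projects to `{A, B}`. -/
def projTree (n : ℕ) (R : Finset (Fin n)) (T : SimpleGraph (Finset (Fin n))) :
    SimpleGraph ↥{W : Finset (Fin n) | W ⊆ R} where
  Adj A B := A.1 ≠ B.1 ∧ ∃ U V : Finset (Fin n), T.Adj U V ∧ U ∩ R = A.1 ∧ V ∩ R = B.1
  symm := by
    constructor
    rintro A B ⟨hne, U, V, hUV, hU, hV⟩
    exact ⟨hne.symm, V, U, hUV.symm, hV, hU⟩
  loopless := by
    constructor
    rintro A ⟨hne, -⟩
    exact hne rfl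

/-- The projected edge set `π_R(T)`: images under `π_R` of the edges of `T` in
directions belonging to `R`. -/
def projEdges {n : ℕ} (R : Finset (Fin n)) (T : SimpleGraph (Finset (Fin n))) :
    Set (Sym2 (Finset (Fin n))) :=
  {f | ∃ e ∈ T.edgeSet, (∃ i ∈ R, edgeInDir i e) ∧ f = Sym2.map (· ∩ R) e}

/-- The decomposition `T ↦ (F_T, (T(R,X))_{X ⊆ R})` of a tree reducing over `R`. -/
def decompose (n : ℕ) (R : Finset (Fin n)) (T : SimpleGraph (Finset (Fin n))) :
    Set (Sym2 (Finset (Fin n))) ×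
      ((X : Finset (Fin n)) → X ⊆ R → SimpleGraph ↥{W : Finset (Fin n) | W ∩ R = X}) :=
  ⟨{e | e ∈ T.edgeSet ∧ ∃ i ∈ R, edgeInDir i e},
   fun X _ => T.induce {W : Finset (Fin n) | W ∩ R = X}⟩

/-- `s` is the least index such that `ε_k(a) = 0` for all `s ≤ k ≤ n`; i.e. the
entries of (an ordered) `a` with index `≤ s` form the unsaturated part of `a`. -/
def UnsatIndex (n : ℕ) (a : Fin n → ℕ) (s : ℕ) : Prop :=
  (∀ k, s ≤ k → k ≤ n → excess a k = 0) ∧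
    ∀ s' < s, ¬ (∀ k, s' ≤ k → k ≤ n → excess a k = 0)

/-- The restriction of `a` to its first `s` entries is reducible (as a tuple of length `s`). -/
def ReducibleBelow {n : ℕ} (a : Fin n → ℕ) (s : ℕ) : Prop :=
  ∃ R : Finset (Fin n), R.Nonempty ∧ (∀ i ∈ R, (i : ℕ) < s) ∧ R.card < s ∧
    ∑ i ∈ R, a i = 2 ^ R.card - 1

/-- `a` is strictly reducible: it is reducible and its unsaturated part is reducible. -/
def StrictlyReducible (n : ℕ) (a : Fin n → ℕ) : Prop :=
  IsReducibleSig a ∧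
    ∃ (σ : Equiv.Perm (Fin n)) (s : ℕ), Monotone (a ∘ σ) ∧
      UnsatIndex n (a ∘ σ) s ∧ ReducibleBelow (a ∘ σ) s



lemma symmDiff_singleton_of_mem {n : ℕ} (X : Finset (Fin n)) (i : Fin n) (hi : i ∈ X) :
    symmDiff X {i} = X.erase i := by
  ext j
  rw [Finset.mem_symmDiff]
  simp only [Finset.mem_singleton, Finset.mem_erase]
  by_cases h : j = i <;> simp [h, hi]

lemma symmDiff_of_sym2_eq {n : ℕ} {A B C D : Finset (Fin n)}
    (h : s(A, B) = s(C, D)) : symmDiff A B = symmDiff C D := by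
  rw [Sym2.eq_iff] at h
  rcases h with ⟨rfl, rfl⟩ | ⟨rfl, rfl⟩
  · rfl
  · exact symmDiff_comm _ _

lemma symmDiff_erase_of_mem {n : ℕ} (X : Finset (Fin n)) (i : Fin n) (hi : i ∈ X) :
    symmDiff X (X.erase i) = {i} := by
  ext j
  rw [Finset.mem_symmDiff]
  simp only [Finset.mem_erase, Finset.mem_singleton]
  by_cases h : j = i <;> simp [h, hi]


/-- Lemma: reducibility constrains upright trees. If the signature of
the upright tree `T` reduces over the proper nonempty set `R`, then `ψ_T(X) ∈ R ↔ X ⊆ R`. -/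
theorem stmt3 (n : ℕ) (a : Fin n → ℕ) (R : Finset (Fin n))
    (hR1 : R.Nonempty) (hR2 : R ≠ Finset.univ) (hred : ReducesOver a R)
    (T : SimpleGraph (Finset (Fin n))) (hT : IsSpanningTreeOf T (cube n))
    (hup : IsUpright T) (hTsig : HasSig T a)
    (ψ : Finset (Fin n) → Fin n) (hψ : IsTreeSection T ψ)
    (X : Finset (Fin n)) (hX : X.Nonempty) :
    ψ X ∈ R ↔ X ⊆ R := by
  classical
  obtain ⟨hle, htree⟩ := hT
  set g : Finset (Fin n) → Sym2 (Finset (Fin n)) := fun Y => s(Y, Y.erase (ψ Y)) with hg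
  set D : Finset (Finset (Fin n)) := Finset.univ.erase ∅ with hD
  have hmemD : ∀ Y : Finset (Fin n), Y ∈ D ↔ Y.Nonempty := by
    intro Y
    simp [hD, Finset.nonempty_iff_ne_empty]
  -- each g Y is a tree edge
  have hgmem : ∀ Y ∈ D, g Y ∈ T.edgeFinset := by
    intro Y hY
    rw [mem_edgeFinset, hg]
    exact (hψ Y ((hmemD Y).1 hY)).2
  -- g injective on D
  have hginj : ∀ Y ∈ D, ∀ Z ∈ D, g Y = g Z → Y = Z := by
    intro Y hY Z hZ h
    rw [hg] at h
    simp only [Sym2.eq_iff] at h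
    rcases h with ⟨rfl, -⟩ | ⟨h1, h2⟩
    · rfl
    · exfalso
      have hcY := Finset.card_erase_of_mem (hψ Y ((hmemD Y).1 hY)).1
      have hcZ := Finset.card_erase_of_mem (hψ Z ((hmemD Z).1 hZ)).1
      have hY1 := Finset.card_pos.2 ((hmemD Y).1 hY)
      have hZ1 := Finset.card_pos.2 ((hmemD Z).1 hZ)
      rw [← h1] at hcZ
      rw [h2] at hcY
      omega
  have hDcard : D.card = 2 ^ n - 1 := by
    rw [hD, Finset.card_erase_of_mem (Finset.mem_univ _), Finset.card_univ]
    simp [Fintype.card_finset]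
  have hEcard : T.edgeFinset.card = 2 ^ n - 1 := by
    have := htree.card_edgeFinset
    rw [Fintype.card_finset, Fintype.card_fin] at this
    omega
  have himg : D.image g = T.edgeFinset := by
    apply Finset.eq_of_subset_of_card_le
    · intro e he
      obtain ⟨Y, hY, rfl⟩ := Finset.mem_image.mp he
      exact hgmem Y hY
    · rw [Finset.card_image_of_injOn hginj, hDcard, hEcard]
  -- dirCount
  have hdir : ∀ i : Fin n, dirCount T i = (D.filter (fun Y => ψ Y = i)).card := by
    intro i
    have hset : {e | e ∈ T.edgeSet ∧ edgeInDir i e}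
        = ↑((D.filter (fun Y => ψ Y = i)).image g) := by
      ext e
      simp only [Set.mem_setOf_eq, Finset.coe_image, Set.mem_image, Finset.mem_coe,
        Finset.mem_filter]
      constructor
      · rintro ⟨he, Y, hYe⟩
        have he' : e ∈ D.image g := by rw [himg, mem_edgeFinset]; exact he
        obtain ⟨Z, hZ, rfl⟩ := Finset.mem_image.mp he'
        refine ⟨Z, ⟨hZ, ?_⟩, rfl⟩
        have h0 := symmDiff_of_sym2_eq hYe
        rw [symmDiff_symmDiff_cancel_left,
          symmDiff_erase_of_mem Z (ψ Z) (hψ Z ((hmemD Z).1 hZ)).1] at h0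
        exact Finset.singleton_injective h0
      · rintro ⟨Y, ⟨hY, rfl⟩, rfl⟩
        refine ⟨(mem_edgeFinset).1 (hgmem Y hY), Y, ?_⟩
        rw [hg]
        simp only
        rw [symmDiff_singleton_of_mem Y (ψ Y) (hψ Y ((hmemD Y).1 hY)).1]
    rw [dirCount, hset, Set.ncard_coe_finset,
      Finset.card_image_of_injOn (fun Y hY Z hZ h =>
        hginj Y (Finset.mem_filter.mp hY).1 Z (Finset.mem_filter.mp hZ).1 h)]
  -- sum over R
  set A : Finset (Finset (Fin n)) := D.filter (fun Y => ψ Y ∈ R) with hA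
  have hAcard : A.card = ∑ i ∈ R, a i := by
    rw [Finset.card_eq_sum_card_fiberwise (f := ψ) (s := A) (t := R)
      (fun Y hY => (Finset.mem_filter.mp hY).2)]
    refine Finset.sum_congr rfl fun i hi => ?_
    rw [← hTsig i, hdir i, Finset.filter_filter]
    congr 1
    apply Finset.filter_congr
    intro Y _
    constructor
    · rintro ⟨-, h⟩; exact h
    · rintro rfl; exact ⟨hi, rfl⟩
  set B : Finset (Finset (Fin n)) := D.filter (fun Y => Y ⊆ R) with hB
  have hBcard : B.card = 2 ^ R.card - 1 := by
    have : B = R.powerset.erase ∅ := by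
      ext Y
      simp [hB, hD, Finset.mem_erase, Finset.mem_powerset, and_comm]
    rw [this, Finset.card_erase_of_mem (Finset.mem_powerset.2 (Finset.empty_subset R)),
      Finset.card_powerset]
  have hBA : B ⊆ A := by
    intro Y hY
    obtain ⟨hYD, hYR⟩ := Finset.mem_filter.mp hY
    exact Finset.mem_filter.2 ⟨hYD, hYR (hψ Y ((hmemD Y).1 hYD)).1⟩
  have hAB : A = B := by
    apply (Finset.eq_of_subset_of_card_le hBA ?_).symm
    rw [hBcard, hAcard, hred]
  have hXD : X ∈ D := (hmemD X).2 hX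
  constructor
  · intro h
    have : X ∈ B := by rw [← hAB]; exact Finset.mem_filter.2 ⟨hXD, h⟩
    exact (Finset.mem_filter.mp this).2
  · intro h
    have : X ∈ A := hBA (Finset.mem_filter.2 ⟨hXD, h⟩)
    exact (Finset.mem_filter.mp this).2
end

section
/- Let S = (a_1, ..., a_n) be an ordered signature of Q_n that is saturated above direction r, where r < n. Then the number of upright spanning trees of Q_n with signature S is equal to the number of upright spanning trees of Q_r with signature (a_1, ..., a_r). -/
open SimpleGraph

section AuxSec

lemma aux_symmDiff_singleton {n : ℕ} {X : Finset (Fin n)} {i : Fin n} (hi : i ∈ X) :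
    symmDiff X {i} = X.erase i := by
  ext j
  simp only [Finset.mem_symmDiff, Finset.mem_singleton, Finset.mem_erase]
  constructor
  · rintro (⟨h1, h2⟩ | ⟨rfl, h2⟩)
    · exact ⟨h2, h1⟩
    · exact absurd hi h2
  · rintro ⟨h1, h2⟩
    exact Or.inl ⟨h2, h1⟩

lemma aux_cube_adj_erase {n : ℕ} {X : Finset (Fin n)} {i : Fin n} (hi : i ∈ X) :
    (cube n).Adj X (X.erase i) := by
  show (symmDiff X (X.erase i)).card = 1
  have : symmDiff X (X.erase i) = {i} := by
    ext j
    simp only [Finset.mem_symmDiff, Finset.mem_erase, Finset.mem_singleton]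
    constructor
    · rintro (⟨h1, h2⟩ | ⟨⟨h1, h2⟩, h3⟩)
      · by_contra hne; exact h2 ⟨hne, h1⟩
      · exact absurd h2 h3
    · rintro rfl
      exact Or.inl ⟨hi, fun h => h.1 rfl⟩
  rw [this, Finset.card_singleton]

lemma aux_cube_adj_iff {n : ℕ} {X Y : Finset (Fin n)} :
    (cube n).Adj X Y ↔ ∃ i, (i ∈ X ∧ Y = X.erase i) ∨ (i ∈ Y ∧ X = Y.erase i) := by
  constructor
  · intro h
    obtain ⟨i, hi⟩ := Finset.card_eq_one.mp h
    have hmem : ∀ j, j ∈ symmDiff X Y ↔ j = i := by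
      intro j; rw [hi]; simp
    by_cases hX : i ∈ X
    · refine ⟨i, Or.inl ⟨hX, ?_⟩⟩
      have hiY : i ∉ Y := by
        intro hY
        have := (hmem i).mpr rfl
        simp [Finset.mem_symmDiff, hX, hY] at this
      ext j
      simp only [Finset.mem_erase]
      constructor
      · intro hj
        have hji : j ≠ i := fun h => hiY (h ▸ hj)
        have : j ∉ symmDiff X Y := fun h => hji ((hmem j).mp h)
        simp only [Finset.mem_symmDiff, not_or, not_and, not_not] at this
        exact ⟨hji, this.2 hj⟩
      · rintro ⟨hji, hj⟩
        have : j ∉ symmDiff X Y := fun h => hji ((hmem j).mp h)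
        simp only [Finset.mem_symmDiff, not_or, not_and, not_not] at this
        exact this.1 hj
    · have hiY : i ∈ Y := by
        have := (hmem i).mpr rfl
        simp only [Finset.mem_symmDiff] at this
        rcases this with ⟨h1, _⟩ | ⟨h1, _⟩
        · exact absurd h1 hX
        · exact h1
      refine ⟨i, Or.inr ⟨hiY, ?_⟩⟩
      ext j
      simp only [Finset.mem_erase]
      constructor
      · intro hj
        have hji : j ≠ i := fun h => hX (h ▸ hj)
        have : j ∉ symmDiff X Y := fun h => hji ((hmem j).mp h)
        simp only [Finset.mem_symmDiff, not_or, not_and, not_not] at this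
        exact ⟨hji, this.1 hj⟩
      · rintro ⟨hji, hj⟩
        have : j ∉ symmDiff X Y := fun h => hji ((hmem j).mp h)
        simp only [Finset.mem_symmDiff, not_or, not_and, not_not] at this
        exact this.2 hj
  · rintro ⟨i, ⟨hi, rfl⟩ | ⟨hi, rfl⟩⟩
    · exact aux_cube_adj_erase hi
    · exact ((cube n).adj_symm (aux_cube_adj_erase hi))

lemma aux_cube_adj_card {n : ℕ} {X Y : Finset (Fin n)} (h : (cube n).Adj X Y) :
    Y.card + 1 = X.card ∨ X.card + 1 = Y.card := by
  rcases aux_cube_adj_iff.mp h with ⟨i, ⟨hi, rfl⟩ | ⟨hi, rfl⟩⟩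
  · left; rw [Finset.card_erase_of_mem hi]; exact Nat.succ_pred_eq_of_pos (Finset.card_pos.mpr ⟨i, hi⟩)
  · right; rw [Finset.card_erase_of_mem hi]; exact Nat.succ_pred_eq_of_pos (Finset.card_pos.mpr ⟨i, hi⟩)

def secEdges {n : ℕ} (ψ : Finset (Fin n) → Fin n) : Set (Sym2 (Finset (Fin n))) :=
  {e | ∃ X : Finset (Fin n), X.Nonempty ∧ e = s(X, X.erase (ψ X))}

def secGraph {n : ℕ} (ψ : Finset (Fin n) → Fin n) : SimpleGraph (Finset (Fin n)) :=
  SimpleGraph.fromEdgeSet (secEdges ψ)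

variable {n : ℕ} {ψ : Finset (Fin n) → Fin n}

lemma aux_erase_ne {X : Finset (Fin n)} {i : Fin n} (hi : i ∈ X) : X.erase i ≠ X := by
  intro h
  exact (Finset.erase_eq_self.mp h) hi

lemma aux_secGraph_adj (hψ : IsSection ψ) {X Y : Finset (Fin n)} :
    (secGraph ψ).Adj X Y ↔
      (X.Nonempty ∧ Y = X.erase (ψ X)) ∨ (Y.Nonempty ∧ X = Y.erase (ψ Y)) := by
  rw [secGraph, fromEdgeSet_adj]
  constructor
  · rintro ⟨⟨W, hW, he⟩, hne⟩
    rw [Sym2.eq_iff] at he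
    rcases he with ⟨rfl, rfl⟩ | ⟨rfl, rfl⟩
    · exact Or.inl ⟨hW, rfl⟩
    · exact Or.inr ⟨hW, rfl⟩
  · rintro (⟨hX, rfl⟩ | ⟨hY, rfl⟩)
    · exact ⟨⟨X, hX, rfl⟩, (aux_erase_ne (hψ X hX)).symm⟩
    · exact ⟨⟨Y, hY, by rw [Sym2.eq_swap]⟩, aux_erase_ne (hψ Y hY)⟩

lemma aux_secGraph_le (hψ : IsSection ψ) : secGraph ψ ≤ cube n := by
  intro X Y h
  rcases (aux_secGraph_adj hψ).mp h with ⟨hX, rfl⟩ | ⟨hY, rfl⟩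
  · exact aux_cube_adj_erase (hψ X hX)
  · exact ((cube n).adj_symm (aux_cube_adj_erase (hψ Y hY)))

lemma aux_secGraph_adj_card (hψ : IsSection ψ) {X Y : Finset (Fin n)}
    (h : (secGraph ψ).Adj X Y) : X.card ≤ Y.card + 1 :=
  match aux_cube_adj_card (aux_secGraph_le hψ h) with
  | Or.inl h => h.ge
  | Or.inr h => by omega

lemma aux_secGraph_reach' (hψ : IsSection ψ) (k : ℕ) :
    ∀ X : Finset (Fin n), X.card = k → (secGraph ψ).Reachable X ∅ := by
  induction k with
  | zero => intro X hc; rw [Finset.card_eq_zero.mp hc]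
  | succ k ih =>
    intro X hc
    have hX : X.Nonempty := Finset.card_pos.mp (by omega)
    have hadj : (secGraph ψ).Adj X (X.erase (ψ X)) :=
      (aux_secGraph_adj hψ).mpr (Or.inl ⟨hX, rfl⟩)
    have hcard : (X.erase (ψ X)).card = k := by
      rw [Finset.card_erase_of_mem (hψ X hX), hc]; rfl
    exact (hadj.reachable).trans (ih _ hcard)

lemma aux_secGraph_reach (hψ : IsSection ψ) (X : Finset (Fin n)) :
    (secGraph ψ).Reachable X ∅ := aux_secGraph_reach' hψ X.card X rfl

lemma aux_secGraph_connected (hψ : IsSection ψ) : (secGraph ψ).Connected := by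
  rw [connected_iff]
  refine ⟨fun X Y => (aux_secGraph_reach hψ X).trans (aux_secGraph_reach hψ Y).symm, ⟨∅⟩⟩

lemma aux_secGraph_edgeSet (hψ : IsSection ψ) : (secGraph ψ).edgeSet = secEdges ψ := by
  rw [secGraph, edgeSet_fromEdgeSet]
  rw [sdiff_eq_left]
  rw [Set.disjoint_left]
  rintro e ⟨W, hW, rfl⟩ hd
  exact aux_erase_ne (hψ W hW) (Sym2.mk_isDiag_iff.mp hd).symm

lemma aux_walk_card (hψ : IsSection ψ) {X Y : Finset (Fin n)} (p : (secGraph ψ).Walk X Y) :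
    X.card ≤ p.length + Y.card := by
  induction p with
  | nil => simp
  | cons h q ih =>
    have := aux_secGraph_adj_card hψ h
    simp only [SimpleGraph.Walk.length_cons]
    omega

lemma aux_secGraph_parent (hψ : IsSection ψ) {X Y : Finset (Fin n)}
    (h : (secGraph ψ).Adj X Y) (hle : Y.card ≤ X.card) :
    X.Nonempty ∧ Y = X.erase (ψ X) := by
  rcases (aux_secGraph_adj hψ).mp h with ⟨hX, rfl⟩ | ⟨hY, rfl⟩
  · exact ⟨hX, rfl⟩
  · exfalso
    rw [Finset.card_erase_of_mem (hψ Y hY)] at hle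
    have : 1 ≤ Y.card := Finset.card_pos.mpr hY
    omega

lemma aux_secGraph_acyclic (hψ : IsSection ψ) : (secGraph ψ).IsAcyclic := by
  intro v c hc
  have hsupne : c.support.toFinset.Nonempty := by
    simp [List.toFinset_nonempty_iff]
  obtain ⟨X, hXmem, hXmax⟩ := Finset.exists_max_image _ Finset.card hsupne
  rw [List.mem_toFinset] at hXmem
  have hXmax' : ∀ Y ∈ c.support, Y.card ≤ X.card := fun Y hY =>
    hXmax Y (List.mem_toFinset.mpr hY)
  set c' := c.rotate X hXmem with hc'def
  have hc' : c'.IsCycle := hc.rotate hXmem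
  have hmax : ∀ Y ∈ c'.support, Y.card ≤ X.card := by
    intro Y hY
    rw [c'.support_eq_cons] at hY
    rcases List.mem_cons.mp hY with rfl | hY'
    · exact le_rfl
    · exact hXmax' Y
        (List.mem_of_mem_tail ((SimpleGraph.Walk.support_rotate c X hXmem).mem_iff.mp hY'))
  -- decompose the cycle
  have hlen : 3 ≤ c'.length := hc'.three_le_length
  have hnotnil : ¬ c'.Nil := by
    rw [SimpleGraph.Walk.not_nil_iff_lt_length]; omega
  obtain ⟨Y1, h1, q, hq⟩ := SimpleGraph.Walk.not_nil_iff.mp hnotnil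
  have hqlen : 2 ≤ q.length := by
    have := congrArg SimpleGraph.Walk.length hq
    rw [SimpleGraph.Walk.length_cons] at this
    omega
  have hqnotnil : ¬ q.Nil := by
    rw [SimpleGraph.Walk.not_nil_iff_lt_length]; omega
  obtain ⟨Y2, h2, r, hr⟩ := SimpleGraph.Walk.not_nil_iff.mp (by
    rw [SimpleGraph.Walk.not_nil_iff_lt_length, SimpleGraph.Walk.length_reverse]; omega :
      ¬ q.reverse.Nil)
  -- Y1 and Y2 are both on the cycle
  have hY1mem : Y1 ∈ c'.support := by
    rw [hq, SimpleGraph.Walk.support_cons]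
    exact List.mem_cons_of_mem _ q.start_mem_support
  have hY2mem : Y2 ∈ c'.support := by
    have : Y2 ∈ q.reverse.support := by
      rw [hr, SimpleGraph.Walk.support_cons]
      exact List.mem_cons_of_mem _ r.start_mem_support
    rw [SimpleGraph.Walk.support_reverse, List.mem_reverse] at this
    rw [hq, SimpleGraph.Walk.support_cons]
    exact List.mem_cons_of_mem _ this
  -- both are the parent of X
  have hp1 := aux_secGraph_parent hψ h1 (hmax Y1 hY1mem)
  have hp2 := aux_secGraph_parent hψ h2 (hmax Y2 hY2mem)
  have hY12 : Y1 = Y2 := by rw [hp1.2, hp2.2]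
  -- the first and last edges of the cycle coincide: contradiction with Nodup
  have hnodup : c'.edges.Nodup := hc'.edges_nodup
  rw [hq, SimpleGraph.Walk.edges_cons, List.nodup_cons] at hnodup
  apply hnodup.1
  have : s(X, Y2) ∈ q.reverse.edges := by
    rw [hr, SimpleGraph.Walk.edges_cons]; exact List.mem_cons_self
  rw [SimpleGraph.Walk.edges_reverse, List.mem_reverse] at this
  rwa [← hY12] at this

lemma aux_secGraph_isTree (hψ : IsSection ψ) : (secGraph ψ).IsTree :=
  ⟨aux_secGraph_connected hψ, aux_secGraph_acyclic hψ⟩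

lemma aux_secGraph_walk_exists (hψ : IsSection ψ) (k : ℕ) :
    ∀ X : Finset (Fin n), X.card = k → ∃ w : (secGraph ψ).Walk X ∅, w.length = k := by
  induction k with
  | zero =>
    intro X hc
    rw [Finset.card_eq_zero.mp hc]
    exact ⟨SimpleGraph.Walk.nil, rfl⟩
  | succ k ih =>
    intro X hc
    have hX : X.Nonempty := Finset.card_pos.mp (by omega)
    have hadj : (secGraph ψ).Adj X (X.erase (ψ X)) :=
      (aux_secGraph_adj hψ).mpr (Or.inl ⟨hX, rfl⟩)
    obtain ⟨w, hw⟩ := ih (X.erase (ψ X)) (by rw [Finset.card_erase_of_mem (hψ X hX), hc]; rfl)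
    exact ⟨SimpleGraph.Walk.cons hadj w, by simp [hw]⟩

lemma aux_secGraph_dist (hψ : IsSection ψ) (X : Finset (Fin n)) :
    (secGraph ψ).dist X ∅ = X.card := by
  apply le_antisymm
  · obtain ⟨w, hw⟩ := aux_secGraph_walk_exists hψ X.card X rfl
    calc (secGraph ψ).dist X ∅ ≤ w.length := SimpleGraph.dist_le w
    _ = X.card := hw
  · obtain ⟨w, hw⟩ := (aux_secGraph_reach hψ X).exists_walk_length_eq_dist
    have := aux_walk_card hψ w
    rw [hw] at this
    simpa using this

lemma aux_secEdges_injOn (hψ : IsSection ψ) :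
    Set.InjOn (fun X => s(X, X.erase (ψ X))) {X : Finset (Fin n) | X.Nonempty} := by
  rintro X hX Y hY hXY
  simp only [Sym2.eq_iff] at hXY
  rcases hXY with ⟨h1, _⟩ | ⟨h1, h2⟩
  · exact h1
  · exfalso
    have hcX : 1 ≤ X.card := Finset.card_pos.mpr hX
    have hcY : 1 ≤ Y.card := Finset.card_pos.mpr hY
    have e1 : Y.card - 1 = X.card := by
      rw [h1, Finset.card_erase_of_mem (hψ Y hY)]
    have e2 : X.card - 1 = Y.card := by
      rw [← h2, Finset.card_erase_of_mem (hψ X hX)]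
    omega

lemma aux_secEdges_eq_image :
    secEdges ψ = (fun X => s(X, X.erase (ψ X))) '' {X : Finset (Fin n) | X.Nonempty} := by
  ext e
  simp only [secEdges, Set.mem_setOf_eq, Set.mem_image]
  exact ⟨fun ⟨X, h1, h2⟩ => ⟨X, h1, h2.symm⟩, fun ⟨X, h1, h2⟩ => ⟨X, h1, h2.symm⟩⟩

lemma aux_nonempty_ncard : {X : Finset (Fin n) | X.Nonempty}.ncard = 2 ^ n - 1 := by
  classical
  rw [Set.ncard_eq_toFinset_card']
  have h1 : {X : Finset (Fin n) | X.Nonempty}.toFinset =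
      Finset.univ.filter (fun X : Finset (Fin n) => X ≠ ∅) := by
    ext X
    simp [Finset.nonempty_iff_ne_empty]
  rw [h1]
  rw [Finset.filter_ne']
  rw [Finset.card_erase_of_mem (Finset.mem_univ _), Finset.card_univ, Fintype.card_finset,
    Fintype.card_fin]

lemma aux_secGraph_edge_ncard (hψ : IsSection ψ) :
    (secGraph ψ).edgeSet.ncard = 2 ^ n - 1 := by
  rw [aux_secGraph_edgeSet hψ, aux_secEdges_eq_image,
    Set.ncard_image_of_injOn (aux_secEdges_injOn hψ), aux_nonempty_ncard]

lemma aux_symmDiff_singleton' {X : Finset (Fin n)} {i : Fin n} (hi : i ∈ X) :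
    symmDiff X {i} = X.erase i := by
  ext j
  simp only [Finset.mem_symmDiff, Finset.mem_singleton, Finset.mem_erase]
  constructor
  · rintro (⟨h1, h2⟩ | ⟨rfl, h2⟩)
    · exact ⟨h2, h1⟩
    · exact absurd hi h2
  · rintro ⟨h1, h2⟩
    exact Or.inl ⟨h2, h1⟩

lemma aux_symmDiff_insert {X : Finset (Fin n)} {i : Fin n} (hi : i ∉ X) :
    symmDiff X {i} = insert i X := by
  ext j
  simp only [Finset.mem_symmDiff, Finset.mem_singleton, Finset.mem_insert]
  constructor
  · rintro (⟨h1, _⟩ | ⟨rfl, _⟩)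
    · exact Or.inr h1
    · exact Or.inl rfl
  · rintro (rfl | h)
    · exact Or.inr ⟨rfl, hi⟩
    · exact Or.inl ⟨h, fun hji => hi (hji ▸ h)⟩

lemma aux_secGraph_dirSet (hψ : IsSection ψ) (i : Fin n) :
    {e | e ∈ (secGraph ψ).edgeSet ∧ edgeInDir i e} =
      (fun X => s(X, X.erase (ψ X))) '' {X : Finset (Fin n) | X.Nonempty ∧ ψ X = i} := by
  ext e
  simp only [Set.mem_setOf_eq, Set.mem_image]
  constructor
  · rintro ⟨he, W, hW⟩
    rw [aux_secGraph_edgeSet hψ] at he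
    obtain ⟨X, hX, rfl⟩ := he
    refine ⟨X, ⟨hX, ?_⟩, rfl⟩
    have hψX := hψ X hX
    have hXc : 1 ≤ X.card := Finset.card_pos.mpr hX
    rcases Sym2.eq_iff.mp hW with ⟨rfl, h2⟩ | ⟨h1, h2⟩
    · by_cases hi : i ∈ X
      · rw [aux_symmDiff_singleton' hi] at h2
        exact (Finset.erase_inj X hψX).mp h2
      · exfalso
        have := congrArg Finset.card h2
        rw [aux_symmDiff_insert hi, Finset.card_erase_of_mem hψX,
          Finset.card_insert_of_notMem hi] at this
        omega
    · by_cases hi : i ∈ W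
      · exfalso
        have hc1 := congrArg Finset.card h1
        have hc2 := congrArg Finset.card h2
        rw [aux_symmDiff_singleton' hi, Finset.card_erase_of_mem hi] at hc1
        rw [Finset.card_erase_of_mem hψX] at hc2
        have hWc : 1 ≤ W.card := Finset.card_pos.mpr ⟨i, hi⟩
        omega
      · rw [aux_symmDiff_insert hi] at h1
        have hiX : i ∈ X := h1 ▸ Finset.mem_insert_self i W
        have : X.erase i = W := by
          rw [h1, Finset.erase_insert hi]
        rw [← this] at h2
        exact (Finset.erase_inj X hψX).mp h2
  · rintro ⟨X, ⟨hX, rfl⟩, rfl⟩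
    have hψX := hψ X hX
    constructor
    · rw [aux_secGraph_edgeSet hψ]
      exact ⟨X, hX, rfl⟩
    · exact ⟨X, by rw [aux_symmDiff_singleton' hψX]⟩

lemma aux_secGraph_dirCount (hψ : IsSection ψ) (i : Fin n) :
    dirCount (secGraph ψ) i = secCount ψ i := by
  rw [dirCount, aux_secGraph_dirSet hψ i, Set.ncard_image_of_injOn
    ((aux_secEdges_injOn hψ).mono (fun X hX => hX.1)), secCount]

lemma aux_tree_unique_closer {V : Type*} [DecidableEq V] {T : SimpleGraph V} (hT : T.IsTree)
    {x w y1 y2 : V} (h1 : T.Adj x y1) (h2 : T.Adj x y2)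
    (d1 : T.dist y1 w < T.dist x w) (d2 : T.dist y2 w < T.dist x w) : y1 = y2 := by
  have hreach : ∀ u v : V, T.Reachable u v := fun u v => hT.isConnected u v
  have key : ∀ y : V, T.Adj x y → T.dist y w < T.dist x w →
      ∃ Q : T.Walk x w, Q.IsPath ∧ Q.getVert 1 = y := by
    intro y hadj hd
    obtain ⟨p, hp⟩ := (hreach y w).exists_walk_length_eq_dist
    have hbl : p.bypass.length = T.dist y w := by
      have h1 := SimpleGraph.Walk.length_bypass_le p
      have h2 := SimpleGraph.dist_le p.bypass
      omega
    have hxns : x ∉ p.bypass.support := by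
      intro hmem
      have : T.dist x w ≤ (p.bypass.dropUntil x hmem).length := SimpleGraph.dist_le _
      have h2 := SimpleGraph.Walk.length_dropUntil_le p.bypass hmem
      omega
    refine ⟨SimpleGraph.Walk.cons hadj p.bypass, (p.bypass_isPath).cons hxns, ?_⟩
    simp
  obtain ⟨Q1, hQ1, hv1⟩ := key y1 h1 d1
  obtain ⟨Q2, hQ2, hv2⟩ := key y2 h2 d2
  have := (hT.existsUnique_path x w).unique hQ1 hQ2
  rw [← hv1, ← hv2, this]

variable {n : ℕ} {T : SimpleGraph (Finset (Fin n))}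

lemma aux_upright_step (hT : IsSpanningTreeOf T (cube n)) (hU : IsUpright T)
    {X : Finset (Fin n)} (hX : X.Nonempty) : ∃ i, i ∈ X ∧ T.Adj X (X.erase i) := by
  have hd : T.dist X ∅ = X.card := hU X
  have hcard : 1 ≤ X.card := Finset.card_pos.mpr hX
  have hreach : T.Reachable X ∅ := hT.2.isConnected X ∅
  obtain ⟨p, hp⟩ := hreach.exists_walk_length_eq_dist
  have hnotnil : ¬ p.Nil := by
    rw [SimpleGraph.Walk.not_nil_iff_lt_length]; omega
  obtain ⟨Y, hadj, q, hq⟩ := SimpleGraph.Walk.not_nil_iff.mp hnotnil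
  have hql : q.length = X.card - 1 := by
    have := congrArg SimpleGraph.Walk.length hq
    rw [SimpleGraph.Walk.length_cons] at this
    omega
  have hdY : T.dist Y ∅ ≤ X.card - 1 := hql ▸ SimpleGraph.dist_le q
  rcases aux_cube_adj_iff.mp (hT.1 hadj) with ⟨i, ⟨hi, rfl⟩ | ⟨hi, hXe⟩⟩
  · exact ⟨i, hi, hadj⟩
  · exfalso
    have h1 : T.dist Y ∅ = Y.card := hU Y
    have h2 : X.card = Y.card - 1 := by
      rw [hXe, Finset.card_erase_of_mem hi]
    have h3 : 1 ≤ Y.card := Finset.card_pos.mpr ⟨i, hi⟩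
    omega

lemma aux_upright_unique (hT : IsSpanningTreeOf T (cube n)) (hU : IsUpright T)
    {X : Finset (Fin n)} (hX : X.Nonempty) {i j : Fin n}
    (hi : i ∈ X ∧ T.Adj X (X.erase i)) (hj : j ∈ X ∧ T.Adj X (X.erase j)) : i = j := by
  have hcard : 1 ≤ X.card := Finset.card_pos.mpr hX
  have hdX : T.dist X ∅ = X.card := hU X
  have di : T.dist (X.erase i) ∅ < T.dist X ∅ := by
    rw [hU _, hdX, Finset.card_erase_of_mem hi.1]; omega
  have dj : T.dist (X.erase j) ∅ < T.dist X ∅ := by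
    rw [hU _, hdX, Finset.card_erase_of_mem hj.1]; omega
  have := aux_tree_unique_closer hT.2 hi.2 hj.2 di dj
  exact (Finset.erase_inj X hi.1).mp this

lemma aux_upright_section (hn : 0 < n) (hT : IsSpanningTreeOf T (cube n)) (hU : IsUpright T) :
    ∃ ψ : Finset (Fin n) → Fin n, IsSection ψ ∧ ψ ∅ = ⟨0, hn⟩ ∧ T = secGraph ψ := by
  classical
  have hex := fun (X : Finset (Fin n)) (hX : X.Nonempty) => aux_upright_step hT hU hX
  set ψ : Finset (Fin n) → Fin n := fun X =>
    if hX : X.Nonempty then Classical.choose (hex X hX) else ⟨0, hn⟩ with hψdef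
  have hspec : ∀ X (hX : X.Nonempty), ψ X ∈ X ∧ T.Adj X (X.erase (ψ X)) := by
    intro X hX
    simp only [hψdef, dif_pos hX]
    exact Classical.choose_spec (hex X hX)
  have hsec : IsSection ψ := fun X hX => (hspec X hX).1
  refine ⟨ψ, hsec, by simp [hψdef], ?_⟩
  have hedge : T.edgeSet = secEdges ψ := by
    ext e
    induction e with
    | h U V =>
      constructor
      · intro he
        rw [SimpleGraph.mem_edgeSet] at he
        rcases aux_cube_adj_iff.mp (hT.1 he) with ⟨i, ⟨hi, rfl⟩ | ⟨hi, hUe⟩⟩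
        · have hUne : U.Nonempty := ⟨i, hi⟩
          have : i = ψ U := aux_upright_unique hT hU hUne ⟨hi, he⟩ (hspec U hUne)
          exact ⟨U, hUne, by rw [this]⟩
        · have hVne : V.Nonempty := ⟨i, hi⟩
          have : i = ψ V := aux_upright_unique hT hU hVne ⟨hi, hUe ▸ he.symm⟩ (hspec V hVne)
          exact ⟨V, hVne, by rw [← this, ← hUe, Sym2.eq_swap]⟩
      · rintro ⟨X, hX, hXe⟩
        rw [SimpleGraph.mem_edgeSet]
        rcases Sym2.eq_iff.mp hXe with ⟨rfl, rfl⟩ | ⟨rfl, rfl⟩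
        · exact (hspec U hX).2
        · exact ((hspec V hX).2).symm
  rw [← SimpleGraph.fromEdgeSet_edgeSet T, hedge]
  rfl

lemma aux_secGraph_injOn (hn : 0 < n) {ψ ψ' : Finset (Fin n) → Fin n}
    (hψ : IsSection ψ) (hψ' : IsSection ψ') (h0 : ψ ∅ = ⟨0, hn⟩) (h0' : ψ' ∅ = ⟨0, hn⟩)
    (heq : secGraph ψ = secGraph ψ') : ψ = ψ' := by
  funext X
  rcases eq_or_ne X ∅ with rfl | hne
  · rw [h0, h0']
  · have hX : X.Nonempty := Finset.nonempty_iff_ne_empty.mpr hne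
    have hmem : s(X, X.erase (ψ X)) ∈ secEdges ψ' := by
      rw [← aux_secGraph_edgeSet hψ', ← heq, aux_secGraph_edgeSet hψ]
      exact ⟨X, hX, rfl⟩
    obtain ⟨W, hW, hWe⟩ := hmem
    rcases Sym2.eq_iff.mp hWe with ⟨rfl, h2⟩ | ⟨h1, h2⟩
    · exact (Finset.erase_inj X (hψ X hX)).mp h2
    · exfalso
      have hcX : 1 ≤ X.card := Finset.card_pos.mpr hX
      have hcW : 1 ≤ W.card := Finset.card_pos.mpr hW
      have e1 : X.card = W.card - 1 := by
        rw [h1, Finset.card_erase_of_mem (hψ' W hW)]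
      have e2 : X.card - 1 = W.card := by
        rw [← h2, Finset.card_erase_of_mem (hψ X hX)]
      omega

lemma aux_count (hn : 0 < n) (a : Fin n → ℕ) :
    {T : SimpleGraph (Finset (Fin n)) |
        IsSpanningTreeOf T (cube n) ∧ IsUpright T ∧ HasSig T a}.ncard =
      {ψ : Finset (Fin n) → Fin n |
        IsSection ψ ∧ ψ ∅ = ⟨0, hn⟩ ∧ ∀ i, secCount ψ i = a i}.ncard := by
  have himage : {T : SimpleGraph (Finset (Fin n)) |
      IsSpanningTreeOf T (cube n) ∧ IsUpright T ∧ HasSig T a} =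
      secGraph '' {ψ : Finset (Fin n) → Fin n |
        IsSection ψ ∧ ψ ∅ = ⟨0, hn⟩ ∧ ∀ i, secCount ψ i = a i} := by
    ext T
    simp only [Set.mem_setOf_eq, Set.mem_image]
    constructor
    · rintro ⟨hT, hU, hS⟩
      obtain ⟨ψ, hψ, h0, rfl⟩ := aux_upright_section hn hT hU
      exact ⟨ψ, ⟨hψ, h0, fun i => by rw [← aux_secGraph_dirCount hψ i, hS i]⟩, rfl⟩
    · rintro ⟨ψ, ⟨hψ, h0, hcnt⟩, rfl⟩
      refine ⟨⟨aux_secGraph_le hψ, aux_secGraph_isTree hψ⟩, ?_, ?_⟩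
      · intro X
        exact aux_secGraph_dist hψ X
      · intro i
        rw [aux_secGraph_dirCount hψ i, hcnt i]
  rw [himage]
  apply Set.ncard_image_of_injOn
  rintro ψ ⟨hψ, h0, -⟩ ψ' ⟨hψ', h0', -⟩ heq
  exact aux_secGraph_injOn hn hψ hψ' h0 h0' heq

end AuxSec



def auxD (n k : ℕ) : Finset (Fin n) := Finset.filter (fun i => (i : ℕ) < k) Finset.univ

lemma auxD_mem {n k : ℕ} {i : Fin n} : i ∈ auxD n k ↔ (i : ℕ) < k := by
  simp [auxD]

lemma auxD_card {n k : ℕ} (hk : k ≤ n) : (auxD n k).card = k := by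
  have : auxD n k = Finset.map (Fin.castLEEmb hk) Finset.univ := by
    ext i
    simp only [auxD_mem, Finset.mem_map, Finset.mem_univ, true_and]
    constructor
    · intro h
      exact ⟨⟨(i : ℕ), h⟩, by ext; simp⟩
    · rintro ⟨j, rfl⟩
      simpa using j.isLt
  rw [this, Finset.card_map, Finset.card_univ, Fintype.card_fin]

lemma aux_strictMono_le' {k n : ℕ} {g : Fin k → Fin n} (hg : StrictMono g) :
    ∀ m : ℕ, ∀ j : Fin k, (j : ℕ) = m → m ≤ (g j : ℕ) := by
  intro m
  induction m with
  | zero => omega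
  | succ m ih =>
    intro j hj
    have hm : m < k := by omega
    have hlt : (⟨m, hm⟩ : Fin k) < j := by
      rw [Fin.lt_def]; simp; omega
    have h1 := hg hlt
    have h2 := ih ⟨m, hm⟩ rfl
    rw [Fin.lt_def] at h1
    omega

lemma aux_strictMono_le {k n : ℕ} {g : Fin k → Fin n} (hg : StrictMono g) :
    ∀ j : Fin k, (j : ℕ) ≤ (g j : ℕ) := fun j => aux_strictMono_le' hg _ j rfl

lemma aux_minSum_le_sum {n : ℕ} {a : Fin n → ℕ} (hmono : Monotone a) (K : Finset (Fin n)) :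
    ∑ i ∈ auxD n K.card, a i ≤ ∑ i ∈ K, a i := by
  classical
  set k := K.card with hk
  have hkn : k ≤ n := by
    have := Finset.card_le_univ K
    simpa using this
  have hDmap : auxD n k = Finset.map (Fin.castLEEmb hkn) Finset.univ := by
    ext i
    simp only [auxD_mem, Finset.mem_map, Finset.mem_univ, true_and]
    constructor
    · intro h
      exact ⟨⟨(i : ℕ), h⟩, by ext; simp⟩
    · rintro ⟨j, rfl⟩
      simpa using j.isLt
  set f := K.orderIsoOfFin hk.symm with hf
  have hstrict : StrictMono (fun j : Fin k => (f j : Fin n)) :=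
    fun j1 j2 h => by exact_mod_cast f.strictMono h
  calc ∑ i ∈ auxD n k, a i = ∑ j : Fin k, a (Fin.castLE hkn j) := by
        rw [hDmap, Finset.sum_map]
        rfl
    _ ≤ ∑ j : Fin k, a (f j : Fin n) := by
        apply Finset.sum_le_sum
        intro j _
        apply hmono
        rw [Fin.le_def]
        simpa using aux_strictMono_le hstrict j
    _ = ∑ i ∈ K, a i := by
        rw [← Finset.sum_attach K (fun i => a i)]
        exact Fintype.sum_equiv f.toEquiv _ _ (fun j => rfl)

lemma aux_minSum_eq {n : ℕ} {a : Fin n → ℕ} (hmono : Monotone a) {k : ℕ} (hk : k ≤ n) :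
    minSum a k = ∑ i ∈ auxD n k, a i := by
  apply le_antisymm
  · exact Nat.sInf_le ⟨auxD n k, auxD_card hk, rfl⟩
  · refine le_csInf ⟨_, auxD n k, auxD_card hk, rfl⟩ ?_
    rintro m ⟨K, hK, rfl⟩
    rw [← hK]
    exact aux_minSum_le_sum hmono K

lemma aux_satSum {n r k : ℕ} {a : Fin n → ℕ} (hmono : Monotone a)
    (hsat : ∀ k', r ≤ k' → k' ≤ n → excess a k' = 0) (h1 : r ≤ k) (h2 : k ≤ n) :
    ∑ i ∈ auxD n k, a i = 2 ^ k - 1 := by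
  have := hsat k h1 h2
  rw [excess, aux_minSum_eq hmono h2] at this
  have hp : 1 ≤ 2 ^ k := Nat.one_le_two_pow
  have h3 : ((∑ i ∈ auxD n k, a i : ℕ) : ℤ) = 2 ^ k - 1 := by linarith
  zify [hp]
  push_cast at h3
  linarith

lemma aux_a_pow {n r : ℕ} {a : Fin n → ℕ} (hmono : Monotone a)
    (hsat : ∀ k', r ≤ k' → k' ≤ n → excess a k' = 0) {i : Fin n} (hi : r ≤ (i : ℕ)) :
    a i = 2 ^ (i : ℕ) := by
  have h1 : ∑ j ∈ auxD n (i : ℕ), a j = 2 ^ (i : ℕ) - 1 :=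
    aux_satSum hmono hsat hi (le_of_lt i.isLt)
  have h2 : ∑ j ∈ auxD n ((i : ℕ) + 1), a j = 2 ^ ((i : ℕ) + 1) - 1 :=
    aux_satSum hmono hsat (by omega) i.isLt
  have hins : auxD n ((i : ℕ) + 1) = insert i (auxD n (i : ℕ)) := by
    ext j
    simp only [auxD_mem, Finset.mem_insert]
    constructor
    · intro h
      by_cases hji : (j : ℕ) = (i : ℕ)
      · exact Or.inl (Fin.ext hji)
      · exact Or.inr (by omega)
    · rintro (rfl | h) <;> omega
  rw [hins, Finset.sum_insert (by simp [auxD_mem])] at h2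
  have hp : 1 ≤ 2 ^ (i : ℕ) := Nat.one_le_two_pow
  rw [h1] at h2
  rw [pow_succ] at h2
  omega

open Classical in
lemma aux_secCount_finset {n : ℕ} (ψ : Finset (Fin n) → Fin n) (i : Fin n) :
    secCount ψ i = (Finset.univ.filter
      (fun X : Finset (Fin n) => X.Nonempty ∧ ψ X = i)).card := by
  rw [secCount, Set.ncard_eq_toFinset_card']
  congr 1
  ext X
  simp

open Classical in
lemma aux_forcing {n r : ℕ} {a : Fin n → ℕ} {ψ : Finset (Fin n) → Fin n}
    (hψ : IsSection ψ) (hcnt : ∀ i, secCount ψ i = a i)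
    (hsum : ∑ i ∈ auxD n r, a i = 2 ^ r - 1) (h2 : r ≤ n) :
    ∀ X : Finset (Fin n), X.Nonempty → (ψ X : ℕ) < r → ∀ j ∈ X, (j : ℕ) < r := by
  set A := Finset.univ.filter
    (fun X : Finset (Fin n) => X.Nonempty ∧ X ⊆ auxD n r) with hA
  set B := Finset.univ.filter
    (fun X : Finset (Fin n) => X.Nonempty ∧ (ψ X : ℕ) < r) with hB
  have hAB : A ⊆ B := by
    intro X hX
    rw [hA, Finset.mem_filter] at hX
    rw [hB, Finset.mem_filter]
    exact ⟨hX.1, hX.2.1, auxD_mem.mp (hX.2.2 (hψ X hX.2.1))⟩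
  have hcardA : A.card = 2 ^ r - 1 := by
    have : A = (auxD n r).powerset.erase ∅ := by
      ext X
      rw [hA, Finset.mem_filter, Finset.mem_erase, Finset.mem_powerset]
      constructor
      · rintro ⟨-, h1, h2⟩
        exact ⟨Finset.nonempty_iff_ne_empty.mp h1, h2⟩
      · rintro ⟨h1, h2⟩
        exact ⟨Finset.mem_univ _, Finset.nonempty_iff_ne_empty.mpr h1, h2⟩
    rw [this, Finset.card_erase_of_mem (Finset.empty_mem_powerset _),
      Finset.card_powerset, auxD_card h2]
  have hcardB : B.card = 2 ^ r - 1 := by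
    have hmem : ∀ X ∈ B, ψ X ∈ auxD n r := by
      intro X hX
      rw [hB, Finset.mem_filter] at hX
      exact auxD_mem.mpr hX.2.2
    rw [Finset.card_eq_sum_card_fiberwise hmem]
    rw [← hsum]
    apply Finset.sum_congr rfl
    intro i hi
    rw [← hcnt i, aux_secCount_finset]
    congr 1
    ext X
    rw [hB, Finset.mem_filter, Finset.mem_filter, Finset.mem_filter]
    constructor
    · rintro ⟨⟨h0, h1, _⟩, h3⟩
      exact ⟨h0, h1, h3⟩
    · rintro ⟨h0, h1, h3⟩
      exact ⟨⟨h0, h1, h3 ▸ auxD_mem.mp hi⟩, h3⟩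
  have hABeq : A = B := Finset.eq_of_subset_of_card_le hAB (by omega)
  intro X hX hval j hj
  have : X ∈ B := by
    rw [hB, Finset.mem_filter]
    exact ⟨Finset.mem_univ _, hX, hval⟩
  rw [← hABeq, hA, Finset.mem_filter] at this
  exact auxD_mem.mp (this.2.2 hj)

section Transfer

variable {n r : ℕ}

def auxι (hrn : r ≤ n) (Y : Finset (Fin r)) : Finset (Fin n) := Y.map (Fin.castLEEmb hrn)

def auxPull (hrn : r ≤ n) (X : Finset (Fin n)) : Finset (Fin r) :=
  Finset.univ.filter (fun j => Fin.castLE hrn j ∈ X)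

lemma aux_mem_ι {hrn : r ≤ n} {Y : Finset (Fin r)} {i : Fin n} :
    i ∈ auxι hrn Y ↔ ∃ j ∈ Y, Fin.castLE hrn j = i := by
  simp [auxι]

lemma aux_mem_pull {hrn : r ≤ n} {X : Finset (Fin n)} {j : Fin r} :
    j ∈ auxPull hrn X ↔ Fin.castLE hrn j ∈ X := by
  simp [auxPull]

lemma aux_pull_ι (hrn : r ≤ n) (Y : Finset (Fin r)) : auxPull hrn (auxι hrn Y) = Y := by
  ext j
  rw [aux_mem_pull, aux_mem_ι]
  constructor
  · rintro ⟨j', hj', he⟩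
    have : j' = j := Fin.castLE_injective hrn he
    exact this ▸ hj'
  · intro hj
    exact ⟨j, hj, rfl⟩

lemma aux_ι_pull (hrn : r ≤ n) {X : Finset (Fin n)} (hX : X ⊆ auxD n r) :
    auxι hrn (auxPull hrn X) = X := by
  ext i
  rw [aux_mem_ι]
  constructor
  · rintro ⟨j, hj, rfl⟩
    exact aux_mem_pull.mp hj
  · intro hi
    have hlt : (i : ℕ) < r := auxD_mem.mp (hX hi)
    refine ⟨⟨(i : ℕ), hlt⟩, ?_, by ext; simp⟩
    rw [aux_mem_pull]
    have : Fin.castLE hrn ⟨(i : ℕ), hlt⟩ = i := by ext; simp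
    rwa [this]

lemma aux_ι_nonempty {hrn : r ≤ n} {Y : Finset (Fin r)} (hY : Y.Nonempty) :
    (auxι hrn Y).Nonempty := by
  obtain ⟨j, hj⟩ := hY
  exact ⟨Fin.castLE hrn j, aux_mem_ι.mpr ⟨j, hj, rfl⟩⟩

lemma aux_ι_subset {hrn : r ≤ n} (Y : Finset (Fin r)) : auxι hrn Y ⊆ auxD n r := by
  intro i hi
  obtain ⟨j, _, rfl⟩ := aux_mem_ι.mp hi
  exact auxD_mem.mpr (by simpa using j.isLt)

lemma aux_ι_injective (hrn : r ≤ n) : Function.Injective (auxι hrn) :=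
  fun Y1 Y2 h => by
    rw [← aux_pull_ι hrn Y1, ← aux_pull_ι hrn Y2, h]

/-- The extension map on sections. -/
noncomputable def auxPhi (hrn : r ≤ n) (hn : 0 < n) (φ : Finset (Fin r) → Fin r)
    (X : Finset (Fin n)) : Fin n :=
  if hsub : X ⊆ auxD n r then
    (if X = ∅ then ⟨0, hn⟩ else Fin.castLE hrn (φ (auxPull hrn X)))
  else X.max' (Finset.nonempty_iff_ne_empty.mpr
    (by rintro rfl; exact hsub (Finset.empty_subset _)))

lemma aux_powerset_ncard {α : Type*} [DecidableEq α] [Fintype α] (B : Finset α) :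
    {W : Finset α | W ⊆ B}.ncard = 2 ^ B.card := by
  classical
  rw [Set.ncard_eq_toFinset_card']
  have : {W : Finset α | W ⊆ B}.toFinset = B.powerset := by
    ext W
    simp
  rw [this, Finset.card_powerset]

/-- Number of sets with max exactly `i` is `2 ^ i`. -/
lemma aux_max_count {n : ℕ} (i : Fin n) :
    {X : Finset (Fin n) | i ∈ X ∧ ∀ j ∈ X, j ≤ i}.ncard = 2 ^ (i : ℕ) := by
  classical
  have himg : {X : Finset (Fin n) | i ∈ X ∧ ∀ j ∈ X, j ≤ i} =
      (fun W => insert i W) '' {W : Finset (Fin n) | W ⊆ auxD n (i : ℕ)} := by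
    ext X
    simp only [Set.mem_setOf_eq, Set.mem_image]
    constructor
    · rintro ⟨hiX, hmax⟩
      refine ⟨X.erase i, ?_, Finset.insert_erase hiX⟩
      intro j hj
      rw [Finset.mem_erase] at hj
      rw [auxD_mem]
      have := hmax j hj.2
      rw [Fin.le_def] at this
      have hne : (j : ℕ) ≠ (i : ℕ) := fun h => hj.1 (Fin.ext h)
      omega
    · rintro ⟨W, hW, rfl⟩
      refine ⟨Finset.mem_insert_self i W, ?_⟩
      intro j hj
      rcases Finset.mem_insert.mp hj with rfl | hj
      · exact le_refl j
      · have := auxD_mem.mp (hW hj)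
        rw [Fin.le_def]
        omega
  rw [himg, Set.ncard_image_of_injOn, aux_powerset_ncard, auxD_card (le_of_lt i.isLt)]
  intro W1 h1 W2 h2 he
  simp only at he
  have hi1 : i ∉ W1 := fun h => by simpa using auxD_mem.mp (h1 h)
  have hi2 : i ∉ W2 := fun h => by simpa using auxD_mem.mp (h2 h)
  rw [← Finset.erase_insert hi1, ← Finset.erase_insert hi2, he]

end Transfer

section Bij

variable {n r : ℕ} (hr0 : 0 < r) (hrn : r ≤ n) (hn : 0 < n)

lemma aux_pull_nonempty {X : Finset (Fin n)} (hsub : X ⊆ auxD n r) (hX : X.Nonempty) :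
    (auxPull hrn X).Nonempty := by
  obtain ⟨x, hx⟩ := hX
  have hlt : (x : ℕ) < r := auxD_mem.mp (hsub hx)
  refine ⟨⟨(x : ℕ), hlt⟩, aux_mem_pull.mpr ?_⟩
  have : Fin.castLE hrn ⟨(x : ℕ), hlt⟩ = x := by ext; simp
  rwa [this]

lemma aux_phi_section {φ : Finset (Fin r) → Fin r} (hφ : IsSection φ) :
    IsSection (auxPhi hrn hn φ) := by
  intro X hX
  rw [auxPhi]
  split_ifs with hsub hemp
  · exact absurd hemp (Finset.nonempty_iff_ne_empty.mp hX)
  · exact aux_mem_pull.mp (hφ _ (aux_pull_nonempty hrn hsub hX))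
  · exact X.max'_mem _

lemma aux_phi_empty (φ : Finset (Fin r) → Fin r) : auxPhi hrn hn φ ∅ = ⟨0, hn⟩ := by
  rw [auxPhi, dif_pos (Finset.empty_subset _), if_pos rfl]

lemma aux_notsub_max {X : Finset (Fin n)} (hsub : ¬ X ⊆ auxD n r) (h : X.Nonempty) :
    r ≤ (X.max' h : ℕ) := by
  obtain ⟨x, hx, hxr⟩ := Finset.not_subset.mp hsub
  have h1 : r ≤ (x : ℕ) := by
    by_contra hc
    exact hxr (auxD_mem.mpr (by omega))
  have h2 := X.le_max' x hx
  rw [Fin.le_def] at h2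
  omega

lemma aux_phi_count_small {φ : Finset (Fin r) → Fin r} (j : Fin r) :
    {X : Finset (Fin n) | X.Nonempty ∧ auxPhi hrn hn φ X = Fin.castLE hrn j} =
      auxι hrn '' {Y : Finset (Fin r) | Y.Nonempty ∧ φ Y = j} := by
  ext X
  simp only [Set.mem_setOf_eq, Set.mem_image]
  constructor
  · rintro ⟨hX, hphi⟩
    rw [auxPhi] at hphi
    by_cases hsub : X ⊆ auxD n r
    · rw [dif_pos hsub, if_neg (Finset.nonempty_iff_ne_empty.mp hX)] at hphi
      have : φ (auxPull hrn X) = j := Fin.castLE_injective hrn hphi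
      exact ⟨auxPull hrn X, ⟨aux_pull_nonempty hrn hsub hX, this⟩, aux_ι_pull hrn hsub⟩
    · exfalso
      rw [dif_neg hsub] at hphi
      have h1 := aux_notsub_max hsub hX
      have h2 : ((X.max' hX : Fin n) : ℕ) = (j : ℕ) := by
        rw [show X.max' hX = Fin.castLE hrn j from hphi]; simp
      have hj := j.isLt
      omega
  · rintro ⟨Y, ⟨hY, hφY⟩, rfl⟩
    refine ⟨aux_ι_nonempty hY, ?_⟩
    rw [auxPhi, dif_pos (aux_ι_subset Y),
      if_neg (Finset.nonempty_iff_ne_empty.mp (aux_ι_nonempty hY)), aux_pull_ι, hφY]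

lemma aux_phi_count_big {φ : Finset (Fin r) → Fin r} {i : Fin n} (hi : r ≤ (i : ℕ)) :
    {X : Finset (Fin n) | X.Nonempty ∧ auxPhi hrn hn φ X = i} =
      {X : Finset (Fin n) | i ∈ X ∧ ∀ j ∈ X, j ≤ i} := by
  ext X
  simp only [Set.mem_setOf_eq]
  constructor
  · rintro ⟨hX, hphi⟩
    rw [auxPhi] at hphi
    by_cases hsub : X ⊆ auxD n r
    · exfalso
      rw [dif_pos hsub, if_neg (Finset.nonempty_iff_ne_empty.mp hX)] at hphi
      have hval : ((Fin.castLE hrn (φ (auxPull hrn X))) : ℕ) = (i : ℕ) := by rw [hphi]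
      have hlt := (φ (auxPull hrn X)).isLt
      rw [Fin.coe_castLE] at hval
      omega
    · rw [dif_neg hsub] at hphi
      exact ⟨hphi ▸ X.max'_mem _, fun j hj => hphi ▸ X.le_max' j hj⟩
  · rintro ⟨hiX, hmax⟩
    have hX : X.Nonempty := ⟨i, hiX⟩
    have hsub : ¬ X ⊆ auxD n r := fun h => by
      have := auxD_mem.mp (h hiX); omega
    refine ⟨hX, ?_⟩
    rw [auxPhi, dif_neg hsub]
    exact le_antisymm (X.max'_le _ _ hmax) (X.le_max' i hiX)

end Bij

section Bij2

variable {n r : ℕ}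

lemma aux_phi_injOn (hr0 : 0 < r) (hrn : r ≤ n) (hn : 0 < n)
    {φ φ' : Finset (Fin r) → Fin r} (h0 : φ ∅ = ⟨0, hr0⟩) (h0' : φ' ∅ = ⟨0, hr0⟩)
    (heq : auxPhi hrn hn φ = auxPhi hrn hn φ') : φ = φ' := by
  funext Y
  rcases eq_or_ne Y ∅ with rfl | hne
  · rw [h0, h0']
  · have hYne : Y.Nonempty := Finset.nonempty_iff_ne_empty.mpr hne
    have hιne : auxι hrn Y ≠ ∅ := Finset.nonempty_iff_ne_empty.mp (aux_ι_nonempty hYne)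
    have := congrFun heq (auxι hrn Y)
    simp only [auxPhi, dif_pos (aux_ι_subset Y), if_neg hιne, aux_pull_ι] at this
    exact Fin.castLE_injective hrn this

lemma aux_section_down (hr0 : 0 < r) (hrn : r ≤ n) (hn : 0 < n)
    {a : Fin n → ℕ} (hmono : Monotone a)
    (hsat : ∀ k', r ≤ k' → k' ≤ n → excess a k' = 0)
    {ψ : Finset (Fin n) → Fin n} (hψ : IsSection ψ) (h0 : ψ ∅ = ⟨0, hn⟩)
    (hcnt : ∀ i, secCount ψ i = a i) :
    ∃ φ : Finset (Fin r) → Fin r,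
      (IsSection φ ∧ φ ∅ = ⟨0, hr0⟩ ∧ ∀ j, secCount φ j = a (Fin.castLE hrn j)) ∧
        auxPhi hrn hn φ = ψ := by
  classical
  have hforce := aux_forcing hψ hcnt (aux_satSum hmono hsat le_rfl hrn) hrn
  set φ : Finset (Fin r) → Fin r := fun Y =>
    if hY : (ψ (auxι hrn Y) : ℕ) < r then (⟨_, hY⟩ : Fin r) else ⟨0, hr0⟩ with hφdef
  have hιe : auxι hrn (∅ : Finset (Fin r)) = ∅ := by simp [auxι]
  have key : ∀ Y : Finset (Fin r), Y.Nonempty →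
      (ψ (auxι hrn Y) : ℕ) < r ∧ ((φ Y : ℕ) = (ψ (auxι hrn Y) : ℕ)) := by
    intro Y hY
    obtain ⟨j, hj, hje⟩ := aux_mem_ι.mp (hψ _ (aux_ι_nonempty hY))
    have hlt : (ψ (auxι hrn Y) : ℕ) < r := by
      rw [← hje]; simpa using j.isLt
    exact ⟨hlt, by rw [hφdef]; simp only [dif_pos hlt]⟩
  have hsec : IsSection φ := by
    intro Y hY
    obtain ⟨j, hj, hje⟩ := aux_mem_ι.mp (hψ _ (aux_ι_nonempty hY))
    have hk := key Y hY
    have : (φ Y : ℕ) = (j : ℕ) := by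
      rw [hk.2, ← hje]; simp
    have : φ Y = j := Fin.ext this
    rwa [this]
  have h0φ : φ ∅ = ⟨0, hr0⟩ := by
    rw [hφdef]
    simp only [hιe, h0]
    rw [dif_pos (by simpa using hr0)]
  have hXsub : ∀ X : Finset (Fin n), X.Nonempty → (ψ X : ℕ) < r → X ⊆ auxD n r := by
    intro X hX hlt i hi
    exact auxD_mem.mpr (hforce X hX hlt i hi)
  have hseteq : ∀ j : Fin r,
      {X : Finset (Fin n) | X.Nonempty ∧ ψ X = Fin.castLE hrn j} =
        auxι hrn '' {Y : Finset (Fin r) | Y.Nonempty ∧ φ Y = j} := by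
    intro j
    ext X
    simp only [Set.mem_setOf_eq, Set.mem_image]
    constructor
    · rintro ⟨hX, hψX⟩
      have hlt : (ψ X : ℕ) < r := by rw [hψX]; simpa using j.isLt
      have hsub := hXsub X hX hlt
      refine ⟨auxPull hrn X, ⟨?_, ?_⟩, aux_ι_pull hrn hsub⟩
      · obtain ⟨x, hx⟩ := hX
        have hxr : (x : ℕ) < r := auxD_mem.mp (hsub hx)
        exact ⟨⟨(x : ℕ), hxr⟩, aux_mem_pull.mpr (by
          have : Fin.castLE hrn ⟨(x : ℕ), hxr⟩ = x := by ext; simp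
          rwa [this])⟩
      · have hpne : (auxPull hrn X).Nonempty := by
          obtain ⟨x, hx⟩ := hX
          have hxr : (x : ℕ) < r := auxD_mem.mp (hsub hx)
          exact ⟨⟨(x : ℕ), hxr⟩, aux_mem_pull.mpr (by
            have : Fin.castLE hrn ⟨(x : ℕ), hxr⟩ = x := by ext; simp
            rwa [this])⟩
        have hk := key (auxPull hrn X) hpne
        apply Fin.ext
        rw [hk.2, aux_ι_pull hrn hsub, hψX]
        simp
    · rintro ⟨Y, ⟨hY, hφY⟩, rfl⟩
      refine ⟨aux_ι_nonempty hY, ?_⟩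
      have hk := key Y hY
      apply Fin.ext
      rw [← hk.2, hφY]
      simp
  have hcntφ : ∀ j, secCount φ j = a (Fin.castLE hrn j) := by
    intro j
    rw [← hcnt (Fin.castLE hrn j), secCount, secCount, hseteq j,
      Set.ncard_image_of_injective _ (aux_ι_injective hrn)]
  refine ⟨φ, ⟨hsec, h0φ, hcntφ⟩, ?_⟩
  funext X
  rcases eq_or_ne X ∅ with rfl | hne
  · rw [aux_phi_empty, h0]
  · have hX : X.Nonempty := Finset.nonempty_iff_ne_empty.mpr hne
    by_cases hsub : X ⊆ auxD n r
    · rw [auxPhi, dif_pos hsub, if_neg hne]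
      have hpne : (auxPull hrn X).Nonempty := by
        obtain ⟨x, hx⟩ := hX
        have hxr : (x : ℕ) < r := auxD_mem.mp (hsub hx)
        exact ⟨⟨(x : ℕ), hxr⟩, aux_mem_pull.mpr (by
          have : Fin.castLE hrn ⟨(x : ℕ), hxr⟩ = x := by ext; simp
          rwa [this])⟩
      have hk := key (auxPull hrn X) hpne
      apply Fin.ext
      rw [Fin.coe_castLE, hk.2, aux_ι_pull hrn hsub]
    · rw [auxPhi, dif_neg hsub]
      have hm := aux_notsub_max hsub hX
      have hmlt := (X.max' hX).isLt
      have hforce2 := aux_forcing hψ hcnt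
        (aux_satSum hmono hsat hm (le_of_lt hmlt)) (le_of_lt hmlt)
      have hge : ((X.max' hX : Fin n) : ℕ) ≤ (ψ X : ℕ) := by
        by_contra hc
        push_neg at hc
        exact absurd (hforce2 X hX hc _ (X.max'_mem hX)) (by omega)
      have hle : (ψ X : ℕ) ≤ ((X.max' hX : Fin n) : ℕ) := X.le_max' _ (hψ X hX)
      exact (Fin.ext (by omega) : ψ X = X.max' hX).symm

end Bij2

lemma aux_sections_ncard {n r : ℕ} (hr0 : 0 < r) (hrn : r ≤ n) (hn : 0 < n)
    {a : Fin n → ℕ} (hmono : Monotone a)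
    (hsat : ∀ k', r ≤ k' → k' ≤ n → excess a k' = 0) :
    {ψ : Finset (Fin n) → Fin n |
        IsSection ψ ∧ ψ ∅ = ⟨0, hn⟩ ∧ ∀ i, secCount ψ i = a i}.ncard =
      {φ : Finset (Fin r) → Fin r |
        IsSection φ ∧ φ ∅ = ⟨0, hr0⟩ ∧ ∀ j, secCount φ j = a (Fin.castLE hrn j)}.ncard := by
  have himg : {ψ : Finset (Fin n) → Fin n |
      IsSection ψ ∧ ψ ∅ = ⟨0, hn⟩ ∧ ∀ i, secCount ψ i = a i} =
      auxPhi hrn hn '' {φ : Finset (Fin r) → Fin r |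
        IsSection φ ∧ φ ∅ = ⟨0, hr0⟩ ∧ ∀ j, secCount φ j = a (Fin.castLE hrn j)} := by
    ext ψ
    simp only [Set.mem_setOf_eq, Set.mem_image]
    constructor
    · rintro ⟨hψ, h0, hcnt⟩
      obtain ⟨φ, hφ, heq⟩ := aux_section_down hr0 hrn hn hmono hsat hψ h0 hcnt
      exact ⟨φ, hφ, heq⟩
    · rintro ⟨φ, ⟨hφ, h0, hcnt⟩, rfl⟩
      refine ⟨aux_phi_section hrn hn hφ, aux_phi_empty hrn hn φ, ?_⟩
      intro i
      by_cases hi : (i : ℕ) < r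
      · have hieq : i = Fin.castLE hrn ⟨(i : ℕ), hi⟩ := by ext; simp
        rw [secCount, hieq, aux_phi_count_small hrn hn,
          Set.ncard_image_of_injective _ (aux_ι_injective hrn), ← secCount, hcnt]
      · push_neg at hi
        rw [secCount, aux_phi_count_big hrn hn hi, aux_max_count,
          aux_a_pow hmono hsat hi]
  rw [himg]
  apply Set.ncard_image_of_injOn
  rintro φ ⟨-, h0, -⟩ φ' ⟨-, h0', -⟩ heq
  exact aux_phi_injOn hr0 hrn hn h0 h0' heq


/-- Corollary: counting upright trees of saturated signatures.
If the ordered signature `a` of `Q_n` is saturated above direction `r < n`, then the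
number of upright spanning trees of `Q_n` with signature `a` equals the number of
upright spanning trees of `Q_r` with signature `(a_1, ..., a_r)`. -/
theorem stmt4 (n r : ℕ) (hr1 : 1 ≤ r) (hr : r < n) (a : Fin n → ℕ)
    (hsig : IsSignature n a) (hmono : Monotone a)
    (hsat : ∀ k, r ≤ k → k ≤ n → excess a k = 0) :
    {T : SimpleGraph (Finset (Fin n)) |
        IsSpanningTreeOf T (cube n) ∧ IsUpright T ∧ HasSig T a}.ncard =
      {T : SimpleGraph (Finset (Fin r)) |
        IsSpanningTreeOf T (cube r) ∧ IsUpright T ∧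
          HasSig T (fun i => a (Fin.castLE hr.le i))}.ncard := by
  have hn : 0 < n := by omega
  have hr0 : 0 < r := hr1
  rw [aux_count hn a, aux_count hr0 (fun i => a (Fin.castLE hr.le i))]
  exact aux_sections_ncard hr0 hr.le hn hmono hsat
end
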